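/- Fix c with 1 < c < 832/825 and set D = X^{1/11 − 0.001}, τ = X^{57/275 − c}. There is a constant C > 0 (depending on c) such that for all sufficiently large X the following holds. Let λ(d) be complex numbers defined for positive integers d ≤ D with |λ(d)| ≤ 1, and λ(d) = 0 whenever d is even or d is not squarefree, and define L(α,X) = Σ_{d ≤ D} λ(d) Σ_{X/2 < p ≤ X, p+2 ≡ 0 (mod d)} e(p^c α) log p, where p runs over primes. Then ∫_{−τ}^{τ} |L(α,X)|² dα ≤ C · X^{2−c} (log X)^6. -/

import Mathlib

open Real Finset intervalIntegral


lemma harm_le : ∀ n : ℕ, ∑ j ∈ Finset.Icc 1 n, (1 : ℝ)/j ≤ 1 + Real.log n := by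
  intro n
  induction n with
  | zero => simp
  | succ n ih =>
    rw [Finset.sum_Icc_succ_top (by omega)]
    rcases Nat.eq_zero_or_pos n with h | h
    · subst h; norm_num
    have hn : (0:ℝ) < n := by exact_mod_cast h
    have key := Real.log_le_sub_one_of_pos (x := (n:ℝ)/(n+1)) (by positivity)
    rw [Real.log_div (by positivity) (by positivity)] at key
    have heq : (n:ℝ)/(n+1) - 1 = -(1/(n+1)) := by field_simp; ring
    rw [heq] at key
    have h1 : Real.log n + 1/((n:ℝ)+1) ≤ Real.log ((n:ℝ)+1) := by linarith
    push_cast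
    linarith

lemma cont_exp_lin (r : ℝ) : Continuous (fun α : ℝ => Complex.exp ((r:ℂ) * Complex.I * α)) :=
  Complex.continuous_exp.comp ((continuous_const).mul Complex.continuous_ofReal)

lemma osc_triv (r τ : ℝ) (hτ : 0 ≤ τ) :
    ‖∫ α in (-τ)..τ, Complex.exp ((r:ℂ) * Complex.I * α)‖ ≤ 2*τ := by
  have h := intervalIntegral.norm_integral_le_of_norm_le_const (a := -τ) (b := τ) (C := 1)
    (f := fun α : ℝ => Complex.exp ((r:ℂ) * Complex.I * α)) ?_
  · calc _ ≤ 1 * |τ - (-τ)| := h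
      _ = 2*τ := by rw [abs_of_nonneg (by linarith)]; ring
  · intro x _
    rw [Complex.norm_exp]
    simp

lemma osc_bound (r τ : ℝ) (hr : r ≠ 0) :
    ‖∫ α in (-τ)..τ, Complex.exp ((r:ℂ) * Complex.I * α)‖ ≤ 2/|r| := by
  have hc : (r:ℂ) * Complex.I ≠ 0 := by
    simp [Complex.ext_iff, hr]
  rw [integral_exp_mul_complex hc]
  rw [norm_div]
  have h1 : ∀ s : ℝ, ‖Complex.exp ((r:ℂ) * Complex.I * s)‖ = 1 := by
    intro s; rw [Complex.norm_exp]; simp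
  have h2 : ‖(r:ℂ) * Complex.I‖ = |r| := by
    simp
  rw [h2]
  gcongr
  calc ‖Complex.exp ((r:ℂ)*Complex.I*(τ:ℝ)) - Complex.exp ((r:ℂ)*Complex.I*((-τ:ℝ):ℝ))‖
      ≤ ‖Complex.exp ((r:ℂ)*Complex.I*(τ:ℝ))‖ + ‖Complex.exp ((r:ℂ)*Complex.I*((-τ:ℝ):ℝ))‖ :=
        norm_sub_le _ _
    _ ≤ 2 := by rw [h1, h1]; norm_num


lemma prog_sum (d m T : ℕ) (hd : 1 ≤ d) {A B : ℝ} (hA : 0 ≤ A) (hB : 0 ≤ B) :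
    ∑ t ∈ Finset.Icc 1 T, (if Nat.dist (d*t) m < d then A else B / (Nat.dist (d*t) m))
      ≤ 2*A + 2*B/d + (2*B/d) * (1 + Real.log ((m:ℝ) + T)) := by
  obtain ⟨ts, hts1, hts2, htsle⟩ : ∃ ts, d * ts ≤ m ∧ m < d * (ts + 1) ∧ ts ≤ m := by
    refine ⟨m / d, Nat.mul_div_le m d, ?_, Nat.div_le_self m d⟩
    have h1 := Nat.div_add_mod m d
    have h2 : m % d < d := Nat.mod_lt m (by omega)
    have h3 : d * (m / d + 1) = d * (m / d) + d := by ring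
    omega
  set f : ℕ → ℝ := fun t => if Nat.dist (d*t) m < d then A else B / (Nat.dist (d*t) m) with hf
  have hf_nonneg : ∀ t, 0 ≤ f t := by
    intro t; rw [hf]; dsimp only; split
    · exact hA
    · positivity
  have hd0 : (0:ℝ) < d := by exact_mod_cast hd
  have hH : ∑ j ∈ Finset.Icc 1 (m+T), (1 : ℝ)/j ≤ 1 + Real.log ((m:ℝ) + T) := by
    have := harm_le (m+T); push_cast at this ⊢; linarith
  change ∑ t ∈ Finset.Icc 1 T, f t ≤ _
  have hsplit : Finset.Icc 1 T =
      ((Finset.Icc 1 T).filter (fun t => t < ts)) ∪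
      (((Finset.Icc 1 T).filter (fun t => t = ts ∨ t = ts + 1)) ∪
       ((Finset.Icc 1 T).filter (fun t => ts + 2 ≤ t))) := by
    ext t
    simp only [Finset.mem_union, Finset.mem_filter, Finset.mem_Icc]
    omega
  have hdisj1 : Disjoint ((Finset.Icc 1 T).filter (fun t => t < ts))
      (((Finset.Icc 1 T).filter (fun t => t = ts ∨ t = ts + 1)) ∪
       ((Finset.Icc 1 T).filter (fun t => ts + 2 ≤ t))) := by
    simp only [Finset.disjoint_left, Finset.mem_union, Finset.mem_filter, Finset.mem_Icc]
    omega
  have hdisj2 : Disjoint ((Finset.Icc 1 T).filter (fun t => t = ts ∨ t = ts + 1))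
      ((Finset.Icc 1 T).filter (fun t => ts + 2 ≤ t)) := by
    simp only [Finset.disjoint_left, Finset.mem_filter, Finset.mem_Icc]
    omega
  rw [hsplit, Finset.sum_union hdisj1, Finset.sum_union hdisj2]
  -- middle piece
  have hmid : ∑ t ∈ (Finset.Icc 1 T).filter (fun t => t = ts ∨ t = ts + 1), f t
      ≤ 2*A + 2*B/d := by
    have hsub : (Finset.Icc 1 T).filter (fun t => t = ts ∨ t = ts + 1) ⊆ {ts, ts+1} := by
      intro t ht
      simp only [Finset.mem_filter] at ht
      simp only [Finset.mem_insert, Finset.mem_singleton]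
      tauto
    calc ∑ t ∈ (Finset.Icc 1 T).filter (fun t => t = ts ∨ t = ts + 1), f t
        ≤ ∑ t ∈ ({ts, ts+1} : Finset ℕ), f t :=
          Finset.sum_le_sum_of_subset_of_nonneg hsub (fun i _ _ => hf_nonneg i)
      _ ≤ ∑ t ∈ ({ts, ts+1} : Finset ℕ), (A + B/d) := by
          apply Finset.sum_le_sum
          intro t _
          rw [hf]; dsimp only; split
          · have : (0:ℝ) ≤ B/d := by positivity
            linarith
          · rename_i hcond
            push_neg at hcond
            have hdist : (d:ℝ) ≤ (Nat.dist (d*t) m : ℝ) := by exact_mod_cast hcond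
            have h2 : B / (Nat.dist (d*t) m : ℝ) ≤ B/d := div_le_div_of_nonneg_left hB hd0 hdist
            linarith
      _ ≤ 2*(A + B/d) := by
          rw [Finset.sum_const, nsmul_eq_mul]
          have hcard : ({ts, ts+1} : Finset ℕ).card ≤ 2 :=
            (Finset.card_insert_le _ _).trans (by simp)
          apply mul_le_mul_of_nonneg_right _ (by positivity)
          exact_mod_cast hcard
      _ = 2*A + 2*B/d := by ring
  -- left piece
  have hleft : ∑ t ∈ (Finset.Icc 1 T).filter (fun t => t < ts), f t
      ≤ (B/d) * (1 + Real.log ((m:ℝ)+T)) := by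
    have hbound : ∀ t ∈ (Finset.Icc 1 T).filter (fun t => t < ts),
        f t ≤ B / ((d * (ts - t) : ℕ) : ℝ) := by
      intro t ht
      simp only [Finset.mem_filter, Finset.mem_Icc] at ht
      have h1 : d * t + d * (ts - t) ≤ m := by
        have : d * t + d * (ts - t) = d * ts := by
          rw [← Nat.mul_add]; congr 1; omega
        omega
      have hpos : 0 < d * (ts - t) := Nat.mul_pos (by omega) (by omega)
      have hdist : Nat.dist (d*t) m = m - d*t := Nat.dist_eq_sub_of_le (by omega)
      have hge : d * (ts - t) ≤ Nat.dist (d*t) m := by omega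
      have hdge : d ≤ d * (ts - t) := Nat.le_mul_of_pos_right d (by omega)
      rw [hf]; dsimp only
      rw [if_neg (by omega)]
      apply div_le_div_of_nonneg_left hB
      · exact_mod_cast hpos
      · exact_mod_cast hge
    calc ∑ t ∈ (Finset.Icc 1 T).filter (fun t => t < ts), f t
        ≤ ∑ t ∈ (Finset.Icc 1 T).filter (fun t => t < ts), B / ((d * (ts - t) : ℕ) : ℝ) :=
          Finset.sum_le_sum hbound
      _ = ∑ s ∈ ((Finset.Icc 1 T).filter (fun t => t < ts)).image (fun t => ts - t),
            B / ((d * s : ℕ) : ℝ) := by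
          rw [Finset.sum_image]
          intro a ha b hb hab
          simp only [Finset.mem_coe, Finset.mem_filter, Finset.mem_Icc] at ha hb hab
          omega
      _ ≤ ∑ s ∈ Finset.Icc 1 (m+T), B / ((d * s : ℕ) : ℝ) := by
          apply Finset.sum_le_sum_of_subset_of_nonneg
          · intro s hs
            simp only [Finset.mem_image, Finset.mem_filter, Finset.mem_Icc] at hs
            obtain ⟨t, ⟨⟨ht1, ht2⟩, ht3⟩, rfl⟩ := hs
            simp only [Finset.mem_Icc]
            omega
          · intro i _ _; positivity
      _ = (B/d) * ∑ s ∈ Finset.Icc 1 (m+T), (1:ℝ)/s := by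
          rw [Finset.mul_sum]
          apply Finset.sum_congr rfl
          intro s hs
          simp only [Finset.mem_Icc] at hs
          have hs0 : (0:ℝ) < s := by exact_mod_cast hs.1
          push_cast
          field_simp
      _ ≤ (B/d) * (1 + Real.log ((m:ℝ)+T)) := by
          apply mul_le_mul_of_nonneg_left hH (by positivity)
  -- right piece
  have hright : ∑ t ∈ (Finset.Icc 1 T).filter (fun t => ts + 2 ≤ t), f t
      ≤ (B/d) * (1 + Real.log ((m:ℝ)+T)) := by
    have hbound : ∀ t ∈ (Finset.Icc 1 T).filter (fun t => ts + 2 ≤ t),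
        f t ≤ B / ((d * (t - ts - 1) : ℕ) : ℝ) := by
      intro t ht
      simp only [Finset.mem_filter, Finset.mem_Icc] at ht
      have h1 : d * (ts + 1) + d * (t - ts - 1) = d * t := by
        rw [← Nat.mul_add]; congr 1; omega
      have hpos : 0 < d * (t - ts - 1) := Nat.mul_pos (by omega) (by omega)
      have hdist : Nat.dist (d*t) m = d*t - m := Nat.dist_eq_sub_of_le_right (by omega)
      have hge : d * (t - ts - 1) ≤ Nat.dist (d*t) m := by omega
      have hdge : d ≤ d * (t - ts - 1) := Nat.le_mul_of_pos_right d (by omega)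
      rw [hf]; dsimp only
      rw [if_neg (by omega)]
      apply div_le_div_of_nonneg_left hB
      · exact_mod_cast hpos
      · exact_mod_cast hge
    calc ∑ t ∈ (Finset.Icc 1 T).filter (fun t => ts + 2 ≤ t), f t
        ≤ ∑ t ∈ (Finset.Icc 1 T).filter (fun t => ts + 2 ≤ t), B / ((d * (t - ts - 1) : ℕ) : ℝ) :=
          Finset.sum_le_sum hbound
      _ = ∑ s ∈ ((Finset.Icc 1 T).filter (fun t => ts + 2 ≤ t)).image (fun t => t - ts - 1),
            B / ((d * s : ℕ) : ℝ) := by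
          rw [Finset.sum_image]
          intro a ha b hb hab
          simp only [Finset.mem_coe, Finset.mem_filter, Finset.mem_Icc] at ha hb hab
          omega
      _ ≤ ∑ s ∈ Finset.Icc 1 (m+T), B / ((d * s : ℕ) : ℝ) := by
          apply Finset.sum_le_sum_of_subset_of_nonneg
          · intro s hs
            simp only [Finset.mem_image, Finset.mem_filter, Finset.mem_Icc] at hs
            obtain ⟨t, ⟨⟨ht1, ht2⟩, ht3⟩, rfl⟩ := hs
            simp only [Finset.mem_Icc]
            omega
          · intro i _ _; positivity
      _ = (B/d) * ∑ s ∈ Finset.Icc 1 (m+T), (1:ℝ)/s := by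
          rw [Finset.mul_sum]
          apply Finset.sum_congr rfl
          intro s hs
          simp only [Finset.mem_Icc] at hs
          have hs0 : (0:ℝ) < s := by exact_mod_cast hs.1
          push_cast
          field_simp
      _ ≤ (B/d) * (1 + Real.log ((m:ℝ)+T)) := by
          apply mul_le_mul_of_nonneg_left hH (by positivity)
  exact le_trans (add_le_add hleft (add_le_add hmid hright)) (le_of_eq (by ring))
lemma arith1 {t u L lX : ℝ} (ht : 0 ≤ t) (hu : 0 ≤ u) (hL : L ≤ 2*lX) (hlX : 1 ≤ lX) :
    2*(2*t) + 2*u + (2*u)*(1+L) ≤ 4*t + (8*lX)*u := by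
  nlinarith [mul_le_mul_of_nonneg_left hL (by linarith : (0:ℝ) ≤ 2*u),
    mul_nonneg (by linarith : (0:ℝ) ≤ lX - 1) hu]

set_option maxHeartbeats 1600000 in
theorem L_square_integral_near_zero (c : ℝ) (hc1 : 1 < c) (hc2 : c < 832 / 825) :
    ∃ C : ℝ, 0 < C ∧ ∃ X₀ : ℝ, ∀ X : ℝ, X₀ ≤ X →
      ∀ lam : ℕ → ℂ,
        (∀ d : ℕ, ‖lam d‖ ≤ 1) →
        (∀ d : ℕ, (2 ∣ d ∨ ¬ Squarefree d) → lam d = 0) →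
        (∫ α in (-(X ^ (57 / 275 - c)))..(X ^ (57 / 275 - c)),
            ‖∑ d ∈ Finset.Icc 1 ⌊X ^ ((1 : ℝ) / 11 - 0.001)⌋₊, lam d *
                ∑ p ∈ (Finset.Icc 1 ⌊X⌋₊).filter
                    (fun p : ℕ => p.Prime ∧ X / 2 < (p : ℝ) ∧ d ∣ (p + 2)),
                  Complex.exp (2 * (Real.pi : ℂ) * Complex.I * (((p : ℝ) ^ c * α : ℝ) : ℂ)) *
                    (Real.log p : ℂ)‖ ^ 2) ≤
          C * X ^ (2 - c) * Real.log X ^ 6 := by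
  refine ⟨200, by norm_num, max 100 (Real.exp 1), fun X hX lam hlam _ => ?_⟩
  have hX100 : (100:ℝ) ≤ X := le_trans (le_max_left _ _) hX
  have hXe : Real.exp 1 ≤ X := le_trans (le_max_right _ _) hX
  have hX0 : (0:ℝ) < X := by linarith
  have hX1 : (1:ℝ) ≤ X := by linarith
  have hlogX : 1 ≤ Real.log X := by
    calc (1:ℝ) = Real.log (Real.exp 1) := (Real.log_exp 1).symm
      _ ≤ Real.log X := Real.log_le_log (Real.exp_pos 1) hXe
  have hlogX0 : 0 ≤ Real.log X := by linarith
  set τ : ℝ := X ^ (57/275 - c) with hτdef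
  have hτ0 : 0 < τ := Real.rpow_pos_of_pos hX0 _
  set N : ℕ := ⌊X ^ ((1:ℝ)/11 - 0.001)⌋₊ with hNdef
  set M : ℕ := ⌊X⌋₊ with hMdef
  have hMX : (M:ℝ) ≤ X := Nat.floor_le (le_of_lt hX0)
  have hNX : (N:ℝ) ≤ X := by
    calc (N:ℝ) ≤ X ^ ((1:ℝ)/11 - 0.001) := Nat.floor_le (Real.rpow_nonneg (le_of_lt hX0) _)
      _ ≤ X ^ (1:ℝ) := Real.rpow_le_rpow_of_exponent_le hX1 (by norm_num)
      _ = X := Real.rpow_one X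
  set KX : ℝ := X ^ (1 - c) with hKXdef
  have hKX0 : 0 < KX := Real.rpow_pos_of_pos hX0 _
  set P : ℕ → Finset ℕ := fun d => (Finset.Icc 1 M).filter
      (fun p : ℕ => p.Prime ∧ X / 2 < (p:ℝ) ∧ d ∣ (p + 2)) with hPdef
  set R : ℕ → ℕ → ℝ := fun p q => 2*π*((p:ℝ)^c - (q:ℝ)^c) with hRdef
  set EE : ℕ → ℕ → ℝ := fun p q =>
      ‖∫ α in (-τ)..τ, Complex.exp (((R p q : ℝ):ℂ) * Complex.I * (α:ℝ))‖ with hEEdef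
  set L : ℝ → ℂ := fun α => ∑ d ∈ Finset.Icc 1 N, lam d *
      ∑ p ∈ P d, Complex.exp (2 * (π:ℂ) * Complex.I * (((p:ℝ) ^ c * α : ℝ) : ℂ))
        * (Real.log p : ℂ) with hLdef
  show (∫ α in (-τ)..τ, ‖L α‖^2) ≤ 200 * X ^ (2 - c) * Real.log X ^ 6
  -- basic facts
  have hPfacts : ∀ d : ℕ, ∀ p ∈ P d, 1 ≤ p ∧ p ≤ M ∧ X/2 < (p:ℝ) ∧ d ∣ (p+2) := by
    intro d p hp
    rw [hPdef] at hp
    simp only [Finset.mem_filter, Finset.mem_Icc] at hp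
    exact ⟨hp.1.1, hp.1.2, hp.2.2.1, hp.2.2.2⟩
  have hlogp : ∀ d : ℕ, ∀ p ∈ P d, 0 ≤ Real.log p ∧ Real.log p ≤ Real.log X := by
    intro d p hp
    obtain ⟨h1, h2, _, _⟩ := hPfacts d p hp
    have hp1 : (1:ℝ) ≤ (p:ℝ) := by exact_mod_cast h1
    constructor
    · exact Real.log_nonneg hp1
    · exact Real.log_le_log (by linarith) (le_trans (by exact_mod_cast h2) hMX)
  have hEE0 : ∀ p q, 0 ≤ EE p q := fun p q => norm_nonneg _
  -- Step 1: rewrite the integral as the norm of a complex integral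
  have hpt : ∀ α : ℝ, L α * (starRingEnd ℂ) (L α) = ((‖L α‖^2 : ℝ) : ℂ) := by
    intro α
    rw [Complex.mul_conj, Complex.normSq_eq_norm_sq]
  have hnonneg : 0 ≤ ∫ α in (-τ)..τ, ‖L α‖^2 :=
    intervalIntegral.integral_nonneg (by linarith) (fun u _ => sq_nonneg _)
  have key1 : (∫ α in (-τ)..τ, ‖L α‖^2)
      = ‖∫ α in (-τ)..τ, L α * (starRingEnd ℂ) (L α)‖ := by
    have h2 : (∫ α in (-τ)..τ, L α * (starRingEnd ℂ) (L α))
        = (((∫ α in (-τ)..τ, ‖L α‖^2) : ℝ) : ℂ) := by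
      simp_rw [hpt]
      exact integral_ofReal
    rw [h2, Complex.norm_real, Real.norm_eq_abs, abs_of_nonneg hnonneg]
  -- Step 2: expand the square
  have hexpand : ∀ α : ℝ, L α * (starRingEnd ℂ) (L α)
      = ∑ d ∈ Finset.Icc 1 N, ∑ d' ∈ Finset.Icc 1 N, ∑ p ∈ P d, ∑ q ∈ P d',
          (lam d * (starRingEnd ℂ) (lam d') * (Real.log p : ℂ) * (Real.log q : ℂ))
            * Complex.exp (((R p q : ℝ):ℂ) * Complex.I * (α:ℝ)) := by
    intro α
    have hee_mul : ∀ p q : ℕ,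
        Complex.exp (2 * (π:ℂ) * Complex.I * (((p:ℝ) ^ c * α : ℝ) : ℂ))
          * (starRingEnd ℂ) (Complex.exp (2 * (π:ℂ) * Complex.I * (((q:ℝ) ^ c * α : ℝ) : ℂ)))
        = Complex.exp (((R p q : ℝ):ℂ) * Complex.I * (α:ℝ)) := by
      intro p q
      rw [← Complex.exp_conj, ← Complex.exp_add]
      congr 1
      have h9 : (starRingEnd ℂ) (2 * (π:ℂ) * Complex.I * (((q:ℝ) ^ c * α : ℝ) : ℂ))
          = - (2 * (π:ℂ) * Complex.I * (((q:ℝ) ^ c * α : ℝ) : ℂ)) := by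
        simp only [map_mul, Complex.conj_I, Complex.conj_ofReal, map_ofNat]
        ring
      rw [h9, hRdef]
      push_cast
      ring
    rw [hLdef]
    simp only
    rw [map_sum, Finset.sum_mul_sum]
    refine Finset.sum_congr rfl (fun d _ => ?_)
    refine Finset.sum_congr rfl (fun d' _ => ?_)
    rw [map_mul, map_sum, mul_mul_mul_comm, Finset.sum_mul_sum, Finset.mul_sum]
    refine Finset.sum_congr rfl (fun p hp => ?_)
    rw [Finset.mul_sum]
    refine Finset.sum_congr rfl (fun q hq => ?_)
    rw [map_mul, Complex.conj_ofReal]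
    calc lam d * (starRingEnd ℂ) (lam d') *
          (Complex.exp (2 * (π:ℂ) * Complex.I * (((p:ℝ) ^ c * α : ℝ) : ℂ)) * (Real.log p : ℂ) *
           ((starRingEnd ℂ) (Complex.exp (2 * (π:ℂ) * Complex.I * (((q:ℝ) ^ c * α : ℝ) : ℂ))) * (Real.log q : ℂ)))
        = (lam d * (starRingEnd ℂ) (lam d') * (Real.log p : ℂ) * (Real.log q : ℂ))
            * (Complex.exp (2 * (π:ℂ) * Complex.I * (((p:ℝ) ^ c * α : ℝ) : ℂ))
              * (starRingEnd ℂ) (Complex.exp (2 * (π:ℂ) * Complex.I * (((q:ℝ) ^ c * α : ℝ) : ℂ)))) := by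
          ring
      _ = _ := by rw [hee_mul]
  -- Step 3: swap integral and sums
  have hcont : ∀ (z : ℂ) (p q : ℕ),
      Continuous (fun α : ℝ => z * Complex.exp (((R p q : ℝ):ℂ) * Complex.I * (α:ℝ))) :=
    fun z p q => continuous_const.mul (cont_exp_lin (R p q))
  have hswap : (∫ α in (-τ)..τ, L α * (starRingEnd ℂ) (L α))
      = ∑ d ∈ Finset.Icc 1 N, ∑ d' ∈ Finset.Icc 1 N, ∑ p ∈ P d, ∑ q ∈ P d',
          (lam d * (starRingEnd ℂ) (lam d') * (Real.log p : ℂ) * (Real.log q : ℂ))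
            * ∫ α in (-τ)..τ, Complex.exp (((R p q : ℝ):ℂ) * Complex.I * (α:ℝ)) := by
    rw [intervalIntegral.integral_congr (g := fun α : ℝ =>
      ∑ d ∈ Finset.Icc 1 N, ∑ d' ∈ Finset.Icc 1 N, ∑ p ∈ P d, ∑ q ∈ P d',
          (lam d * (starRingEnd ℂ) (lam d') * (Real.log p : ℂ) * (Real.log q : ℂ))
            * Complex.exp (((R p q : ℝ):ℂ) * Complex.I * (α:ℝ)))
      (fun α _ => hexpand α)]
    rw [intervalIntegral.integral_finset_sum (fun d _ => by
      apply Continuous.intervalIntegrable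
      exact continuous_finset_sum _ (fun d' _ => continuous_finset_sum _ (fun p _ =>
        continuous_finset_sum _ (fun q _ => hcont _ p q))))]
    refine Finset.sum_congr rfl (fun d _ => ?_)
    rw [intervalIntegral.integral_finset_sum (fun d' _ => by
      apply Continuous.intervalIntegrable
      exact continuous_finset_sum _ (fun p _ =>
        continuous_finset_sum _ (fun q _ => hcont _ p q)))]
    refine Finset.sum_congr rfl (fun d' _ => ?_)
    rw [intervalIntegral.integral_finset_sum (fun p _ => by
      apply Continuous.intervalIntegrable
      exact continuous_finset_sum _ (fun q _ => hcont _ p q))]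
    refine Finset.sum_congr rfl (fun p _ => ?_)
    rw [intervalIntegral.integral_finset_sum (fun q _ => (hcont _ p q).intervalIntegrable _ _)]
    refine Finset.sum_congr rfl (fun q _ => ?_)
    exact intervalIntegral.integral_const_mul _ _
  -- Step 4: norm bound
  have key2 : ‖∫ α in (-τ)..τ, L α * (starRingEnd ℂ) (L α)‖
      ≤ ∑ d ∈ Finset.Icc 1 N, ∑ d' ∈ Finset.Icc 1 N, ∑ p ∈ P d, ∑ q ∈ P d',
          (Real.log X * Real.log X) * EE p q := by
    rw [hswap]
    refine le_trans (norm_sum_le _ _) (Finset.sum_le_sum (fun d _ => ?_))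
    refine le_trans (norm_sum_le _ _) (Finset.sum_le_sum (fun d' _ => ?_))
    refine le_trans (norm_sum_le _ _) (Finset.sum_le_sum (fun p hp => ?_))
    refine le_trans (norm_sum_le _ _) (Finset.sum_le_sum (fun q hq => ?_))
    rw [norm_mul]
    have hlp := hlogp d p hp
    have hlq := hlogp d' q hq
    have h1 : ‖lam d * (starRingEnd ℂ) (lam d') * (Real.log p : ℂ) * (Real.log q : ℂ)‖
        ≤ Real.log X * Real.log X := by
      rw [norm_mul, norm_mul, norm_mul, RCLike.norm_conj]
      rw [Complex.norm_real, Complex.norm_real, Real.norm_eq_abs, Real.norm_eq_abs]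
      rw [abs_of_nonneg hlp.1, abs_of_nonneg hlq.1]
      have h2 : ‖lam d‖ * ‖lam d'‖ ≤ 1 := by
        have g1 := hlam d; have g2 := hlam d'
        have g3 := norm_nonneg (lam d); have g4 := norm_nonneg (lam d')
        nlinarith
      have h3 : Real.log p * Real.log q ≤ Real.log X * Real.log X :=
        mul_le_mul hlp.2 hlq.2 hlq.1 hlogX0
      have h4 : ‖lam d‖ * ‖lam d'‖ * Real.log p * Real.log q
          = (‖lam d‖ * ‖lam d'‖) * (Real.log p * Real.log q) := by ring
      rw [h4]
      calc (‖lam d‖ * ‖lam d'‖) * (Real.log p * Real.log q)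
          ≤ 1 * (Real.log p * Real.log q) :=
            mul_le_mul_of_nonneg_right h2 (mul_nonneg hlp.1 hlq.1)
        _ = Real.log p * Real.log q := one_mul _
        _ ≤ Real.log X * Real.log X := h3
    have h2 : ‖∫ α in (-τ)..τ, Complex.exp (((R p q : ℝ):ℂ) * Complex.I * (α:ℝ))‖ = EE p q := by
      rw [hEEdef]
    rw [h2]
    exact mul_le_mul_of_nonneg_right h1 (hEE0 p q)
  -- Step 5: separation of frequencies
  have hX2 : (0:ℝ) < X/2 := by linarith
  have hdir : ∀ a b : ℕ, X/2 < (a:ℝ) → a < b →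
      (X/2)^(c-1) * ((b:ℝ) - (a:ℝ)) ≤ (b:ℝ)^c - (a:ℝ)^c := by
    intro a b ha hab
    have ha0 : (0:ℝ) < a := lt_trans hX2 ha
    have hab' : (a:ℝ) ≤ (b:ℝ) := by exact_mod_cast le_of_lt hab
    have hb0 : (0:ℝ) < b := lt_of_lt_of_le ha0 hab'
    have h1 : (a:ℝ)^(c-1) ≤ (b:ℝ)^(c-1) := Real.rpow_le_rpow (le_of_lt ha0) hab' (by linarith)
    have h2 : (X/2)^(c-1) ≤ (a:ℝ)^(c-1) :=
      Real.rpow_le_rpow (le_of_lt hX2) (le_of_lt ha) (by linarith)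
    have hbc : (b:ℝ)^c = (b:ℝ)^(c-1) * b := by
      have e := Real.rpow_add_one (ne_of_gt hb0) (c-1)
      have e2 : c - 1 + 1 = c := by ring
      rw [e2] at e; exact e
    have hac : (a:ℝ)^c = (a:ℝ)^(c-1) * a := by
      have e := Real.rpow_add_one (ne_of_gt ha0) (c-1)
      have e2 : c - 1 + 1 = c := by ring
      rw [e2] at e; exact e
    have h3 : (a:ℝ)^(c-1) * (b:ℝ) ≤ (b:ℝ)^(c-1) * b := mul_le_mul_of_nonneg_right h1 hb0.le
    have h4 : (X/2)^(c-1) * ((b:ℝ)-(a:ℝ)) ≤ (a:ℝ)^(c-1) * ((b:ℝ)-(a:ℝ)) :=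
      mul_le_mul_of_nonneg_right h2 (by linarith)
    have h5 : (a:ℝ)^(c-1)*((b:ℝ)-(a:ℝ)) = (a:ℝ)^(c-1)*b - (a:ℝ)^(c-1)*a := by ring
    rw [hbc, hac]
    linarith
  have hsep : ∀ p q : ℕ, X/2 < (p:ℝ) → X/2 < (q:ℝ) → p ≠ q →
      (X/2)^(c-1) * (Nat.dist q p : ℝ) ≤ |(p:ℝ)^c - (q:ℝ)^c| := by
    intro p q hp hq hne
    have hpow0 : (0:ℝ) ≤ (X/2)^(c-1) := Real.rpow_nonneg (le_of_lt hX2) _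
    rcases lt_or_gt_of_ne hne with h | h
    · have hkey := hdir p q hp h
      have hd : (Nat.dist q p : ℝ) = (q:ℝ) - p := by
        rw [Nat.dist_eq_sub_of_le_right (le_of_lt h)]
        have : (p:ℕ) ≤ q := le_of_lt h
        push_cast [this]
        ring
      have hd0 : (0:ℝ) ≤ (q:ℝ) - p := by
        have : (p:ℝ) ≤ q := by exact_mod_cast le_of_lt h
        linarith
      rw [hd, abs_sub_comm]
      rw [abs_of_nonneg (by nlinarith)]
      exact hkey
    · have hkey := hdir q p hq h
      have hd : (Nat.dist q p : ℝ) = (p:ℝ) - q := by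
        rw [Nat.dist_eq_sub_of_le (le_of_lt h)]
        have : (q:ℕ) ≤ p := le_of_lt h
        push_cast [this]
        ring
      have hd0 : (0:ℝ) ≤ (p:ℝ) - q := by
        have : (q:ℝ) ≤ p := by exact_mod_cast le_of_lt h
        linarith
      rw [hd]
      rw [abs_of_nonneg (by nlinarith)]
      exact hkey
  -- KX bound for the kernel constant
  have hKXle : 1/(π * (X/2)^(c-1)) ≤ KX := by
    have hp1 : (0:ℝ) < X^(c-1) := Real.rpow_pos_of_pos hX0 _
    have h2c : (2:ℝ)^(c-1) ≤ 2 := by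
      have hce : c - 1 ≤ 1 := by linarith
      calc (2:ℝ)^(c-1) ≤ (2:ℝ)^(1:ℝ) := Real.rpow_le_rpow_of_exponent_le one_le_two hce
        _ = 2 := Real.rpow_one 2
    have h2c0 : (0:ℝ) < (2:ℝ)^(c-1) := by positivity
    have hsplit2 : (X/2:ℝ)^(c-1) = X^(c-1) / (2:ℝ)^(c-1) :=
      Real.div_rpow (le_of_lt hX0) (by norm_num) _
    have h3 : X^(c-1)/2 ≤ (X/2)^(c-1) := by
      rw [hsplit2]
      exact div_le_div_of_nonneg_left (le_of_lt hp1) h2c0 h2c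
    have h4 : X^(c-1) ≤ π * (X/2)^(c-1) := by
      have := Real.two_le_pi
      nlinarith [Real.rpow_nonneg (le_of_lt hX2) (c-1)]
    have h5 : (1:ℝ)/(π * (X/2)^(c-1)) ≤ 1/X^(c-1) :=
      one_div_le_one_div_of_le hp1 h4
    have h6 : (1:ℝ)/X^(c-1) = KX := by
      rw [hKXdef]
      rw [show (1-c:ℝ) = -(c-1) by ring, Real.rpow_neg (le_of_lt hX0)]
      rw [one_div]
    linarith
  -- pointwise bound for EE in terms of the progression variable
  have hEEbound : ∀ d' p q : ℕ, 1 ≤ d' → X/2 < (p:ℝ) → q ∈ P d' →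
      EE p q ≤ (if Nat.dist (d' * ((q+2)/d')) (p+2) < d' then 2*τ
                else KX / (Nat.dist (d' * ((q+2)/d')) (p+2))) := by
    intro d' p q hd' hp hq
    obtain ⟨hq1, hq2, hq3, hq4⟩ := hPfacts d' q hq
    have hdt : d' * ((q+2)/d') = q+2 := Nat.mul_div_cancel' hq4
    rw [hdt, Nat.dist_add_add_right q 2 p]
    split
    · rw [hEEdef]
      exact osc_triv (R p q) τ (le_of_lt hτ0)
    · rename_i hcond
      push_neg at hcond
      have hne : p ≠ q := by
        intro h
        rw [h, Nat.dist_self] at hcond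
        omega
      have hds : (1:ℝ) ≤ (Nat.dist q p : ℝ) := by exact_mod_cast le_trans hd' hcond
      have hpow0 : (0:ℝ) < (X/2)^(c-1) := Real.rpow_pos_of_pos hX2 _
      have hsepv := hsep p q hp hq3 hne
      have habs : 0 < |(p:ℝ)^c - (q:ℝ)^c| := by nlinarith
      have hRne : R p q ≠ 0 := by
        rw [hRdef]
        simp only
        apply mul_ne_zero (mul_ne_zero two_ne_zero (ne_of_gt Real.pi_pos))
        exact abs_pos.mp habs
      have h1 : EE p q ≤ 2/|R p q| := by
        rw [hEEdef]
        exact osc_bound _ τ hRne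
      have hRabs : |R p q| = 2*π*|(p:ℝ)^c - (q:ℝ)^c| := by
        rw [hRdef]
        simp only
        rw [abs_mul, abs_of_pos (by positivity : (0:ℝ) < 2*π)]
      have hd2 : (0:ℝ) < (Nat.dist q p : ℝ) := by linarith
      calc EE p q ≤ 2/|R p q| := h1
        _ = 1/(π * |(p:ℝ)^c - (q:ℝ)^c|) := by rw [hRabs]; ring
        _ ≤ 1/(π * ((X/2)^(c-1) * (Nat.dist q p : ℝ))) := by
            apply one_div_le_one_div_of_le (by positivity)
            exact mul_le_mul_of_nonneg_left hsepv (le_of_lt Real.pi_pos)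
        _ = (1/(π * (X/2)^(c-1))) * (1/(Nat.dist q p : ℝ)) := by ring
        _ ≤ KX * (1/(Nat.dist q p : ℝ)) :=
            mul_le_mul_of_nonneg_right hKXle (by positivity)
        _ = KX / (Nat.dist q p : ℝ) := by ring
  -- Step 6: the q-sum bound
  have hqsum : ∀ d ∈ Finset.Icc 1 N, ∀ d' ∈ Finset.Icc 1 N, ∀ p ∈ P d,
      ∑ q ∈ P d', EE p q ≤ 4*τ + (8*Real.log X) * (KX/(d':ℝ)) := by
    intro d hd d' hd' p hp
    simp only [Finset.mem_Icc] at hd hd'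
    obtain ⟨hp1, hp2, hp3, _⟩ := hPfacts d p hp
    have hd'0 : (0:ℝ) < (d':ℝ) := by exact_mod_cast hd'.1
    have hg0 : ∀ t : ℕ, (0:ℝ) ≤ (if Nat.dist (d'*t) (p+2) < d' then 2*τ
        else KX / (Nat.dist (d'*t) (p+2))) := by
      intro t
      split
      · positivity
      · positivity
    have step1 : ∑ q ∈ P d', EE p q
        ≤ ∑ q ∈ P d', (if Nat.dist (d'*((q+2)/d')) (p+2) < d' then 2*τ
            else KX / (Nat.dist (d'*((q+2)/d')) (p+2))) :=
      Finset.sum_le_sum (fun q hq => hEEbound d' p q hd'.1 hp3 hq)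
    have step2 : ∑ q ∈ P d', (if Nat.dist (d'*((q+2)/d')) (p+2) < d' then 2*τ
            else KX / (Nat.dist (d'*((q+2)/d')) (p+2)))
        = ∑ t ∈ (P d').image (fun q => (q+2)/d'),
            (if Nat.dist (d'*t) (p+2) < d' then 2*τ else KX / (Nat.dist (d'*t) (p+2))) := by
      rw [Finset.sum_image]
      intro a ha b hb hab
      have h1 : d' * ((a+2)/d') = a+2 := Nat.mul_div_cancel' (hPfacts d' a ha).2.2.2
      have h2 : d' * ((b+2)/d') = b+2 := Nat.mul_div_cancel' (hPfacts d' b hb).2.2.2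
      simp only at hab
      rw [hab] at h1
      omega
    have step3 : ∑ t ∈ (P d').image (fun q => (q+2)/d'),
            (if Nat.dist (d'*t) (p+2) < d' then 2*τ else KX / (Nat.dist (d'*t) (p+2)))
        ≤ ∑ t ∈ Finset.Icc 1 (M+2),
            (if Nat.dist (d'*t) (p+2) < d' then 2*τ else KX / (Nat.dist (d'*t) (p+2))) := by
      apply Finset.sum_le_sum_of_subset_of_nonneg
      · intro t ht
        simp only [Finset.mem_image] at ht
        obtain ⟨q, hq, rfl⟩ := ht
        obtain ⟨hq1, hq2, _, hq4⟩ := hPfacts d' q hq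
        have h1 : d' * ((q+2)/d') = q+2 := Nat.mul_div_cancel' hq4
        simp only [Finset.mem_Icc]
        constructor
        · rcases Nat.eq_zero_or_pos ((q+2)/d') with h0 | h0
          · rw [h0, Nat.mul_zero] at h1; omega
          · exact h0
        · have h2 : (q+2)/d' ≤ d' * ((q+2)/d') := Nat.le_mul_of_pos_left _ (by omega)
          omega
      · intro i _ _; exact hg0 i
    have step4 := prog_sum d' (p+2) (M+2) hd'.1 (by linarith : (0:ℝ) ≤ 2*τ) (le_of_lt hKX0)
    have hlog2 : Real.log (((p+2:ℕ):ℝ) + ((M+2:ℕ):ℝ)) ≤ 2 * Real.log X := by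
      have hpM : (p:ℝ) ≤ (M:ℝ) := by exact_mod_cast hp2
      have hb : ((p+2:ℕ):ℝ) + ((M+2:ℕ):ℝ) ≤ X*X := by
        push_cast
        nlinarith
      calc Real.log (((p+2:ℕ):ℝ) + ((M+2:ℕ):ℝ)) ≤ Real.log (X*X) :=
            Real.log_le_log (by positivity) hb
        _ = Real.log X + Real.log X := Real.log_mul (by linarith) (by linarith)
        _ ≤ 2*Real.log X := by linarith
    have hu0 : (0:ℝ) ≤ KX/(d':ℝ) := div_nonneg hKX0.le hd'0.le
    have hfin : 2*(2*τ) + 2*KX/(d':ℝ)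
          + (2*KX/(d':ℝ))*(1 + Real.log (((p+2:ℕ):ℝ) + ((M+2:ℕ):ℝ)))
        ≤ 4*τ + (8*Real.log X) * (KX/(d':ℝ)) := by
      have e : 2*(2*τ) + 2*KX/(d':ℝ)
            + (2*KX/(d':ℝ))*(1 + Real.log (((p+2:ℕ):ℝ) + ((M+2:ℕ):ℝ)))
          = 2*(2*τ) + 2*(KX/(d':ℝ))
            + (2*(KX/(d':ℝ)))*(1 + Real.log (((p+2:ℕ):ℝ) + ((M+2:ℕ):ℝ))) := by ring
      rw [e]
      exact arith1 hτ0.le hu0 hlog2 hlogX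
    calc ∑ q ∈ P d', EE p q
        ≤ _ := step1
      _ = _ := step2
      _ ≤ _ := step3
      _ ≤ _ := step4
      _ ≤ 4*τ + (8*Real.log X) * (KX/(d':ℝ)) := hfin
  -- Step 7: cardinality of P d
  have hcard : ∀ d : ℕ, 1 ≤ d → ((P d).card : ℝ) ≤ 3*X/(d:ℝ) := by
    intro d hd
    have hd0 : (0:ℝ) < (d:ℝ) := by exact_mod_cast hd
    have h1 : (P d).card ≤ (Finset.Icc 1 ((M+2)/d)).card := by
      apply Finset.card_le_card_of_injOn (fun p => (p+2)/d)
      · intro p hp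
        obtain ⟨hp1, hp2, _, hp4⟩ := hPfacts d p hp
        have hdt : d * ((p+2)/d) = p+2 := Nat.mul_div_cancel' hp4
        simp only [Finset.mem_coe, Finset.mem_Icc]
        constructor
        · rcases Nat.eq_zero_or_pos ((p+2)/d) with h0 | h0
          · rw [h0, Nat.mul_zero] at hdt; omega
          · exact h0
        · exact Nat.div_le_div_right (by omega)
      · intro a ha b hb hab
        have ha' := hPfacts d a (Finset.mem_coe.mp ha)
        have hb' := hPfacts d b (Finset.mem_coe.mp hb)
        have g1 : d * ((a+2)/d) = a+2 := Nat.mul_div_cancel' ha'.2.2.2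
        have g2 : d * ((b+2)/d) = b+2 := Nat.mul_div_cancel' hb'.2.2.2
        simp only at hab
        rw [hab] at g1
        omega
    have h2 : ((Finset.Icc 1 ((M+2)/d)).card : ℝ) = (((M+2)/d : ℕ) : ℝ) := by
      rw [Nat.card_Icc]
      simp
    calc ((P d).card : ℝ) ≤ (((M+2)/d : ℕ) : ℝ) := by
          rw [← h2]; exact_mod_cast h1
      _ ≤ ((M+2:ℕ):ℝ)/(d:ℝ) := Nat.cast_div_le
      _ ≤ 3*X/(d:ℝ) := by
          apply (div_le_div_iff_of_pos_right hd0).mpr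
          push_cast
          linarith
  -- harmonic sums
  have hharm : ∀ n : ℕ, (n:ℝ) ≤ X → ∑ j ∈ Finset.Icc 1 n, (1:ℝ)/(j:ℝ) ≤ 2*Real.log X := by
    intro n hn
    have h1 := harm_le n
    have h2 : Real.log (n:ℝ) ≤ Real.log X := by
      rcases Nat.eq_zero_or_pos n with h0 | h0
      · rw [h0]
        simpa using hlogX0
      · exact Real.log_le_log (by exact_mod_cast h0) hn
    linarith
  -- Step 8: assemble the d-sum bound
  have hsum_d : ∀ d ∈ Finset.Icc 1 N,
      (∑ d' ∈ Finset.Icc 1 N, ∑ p ∈ P d, ∑ q ∈ P d', EE p q)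
        ≤ (3*X/(d:ℝ)) * (4*τ*(N:ℝ) + 16*KX*Real.log X^2) := by
    intro d hd
    have hd1 : 1 ≤ d := (Finset.mem_Icc.mp hd).1
    have hXd0 : (0:ℝ) ≤ 3*X/(d:ℝ) := div_nonneg (by linarith) (Nat.cast_nonneg d)
    have h1 : ∀ d' ∈ Finset.Icc 1 N,
        (∑ p ∈ P d, ∑ q ∈ P d', EE p q)
          ≤ (3*X/(d:ℝ)) * (4*τ + (8*Real.log X)*(KX/(d':ℝ))) := by
      intro d' hd'
      have hd'1 : 1 ≤ d' := (Finset.mem_Icc.mp hd').1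
      have hd'0 : (0:ℝ) < (d':ℝ) := by exact_mod_cast hd'1
      have hu0 : (0:ℝ) ≤ KX/(d':ℝ) := div_nonneg hKX0.le hd'0.le
      have hbr0 : (0:ℝ) ≤ 4*τ + (8*Real.log X)*(KX/(d':ℝ)) := by
        have := mul_nonneg (by linarith : (0:ℝ) ≤ 8*Real.log X) hu0
        linarith
      calc (∑ p ∈ P d, ∑ q ∈ P d', EE p q)
          ≤ ∑ _p ∈ P d, (4*τ + (8*Real.log X)*(KX/(d':ℝ))) :=
            Finset.sum_le_sum (fun p hp => hqsum d hd d' hd' p hp)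
        _ = ((P d).card : ℝ) * (4*τ + (8*Real.log X)*(KX/(d':ℝ))) := by
            rw [Finset.sum_const, nsmul_eq_mul]
        _ ≤ (3*X/(d:ℝ)) * (4*τ + (8*Real.log X)*(KX/(d':ℝ))) :=
            mul_le_mul_of_nonneg_right (hcard d hd1) hbr0
    calc (∑ d' ∈ Finset.Icc 1 N, ∑ p ∈ P d, ∑ q ∈ P d', EE p q)
        ≤ ∑ d' ∈ Finset.Icc 1 N, (3*X/(d:ℝ)) * (4*τ + (8*Real.log X)*(KX/(d':ℝ))) :=
          Finset.sum_le_sum h1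
      _ = (3*X/(d:ℝ)) * ∑ d' ∈ Finset.Icc 1 N, (4*τ + (8*Real.log X)*(KX/(d':ℝ))) := by
          rw [Finset.mul_sum]
      _ ≤ (3*X/(d:ℝ)) * (4*τ*(N:ℝ) + 16*KX*Real.log X^2) := by
          apply mul_le_mul_of_nonneg_left _ hXd0
          have e1 : ∑ d' ∈ Finset.Icc 1 N, (4*τ + (8*Real.log X)*(KX/(d':ℝ)))
              = 4*τ*(N:ℝ) + (8*Real.log X*KX) * ∑ d' ∈ Finset.Icc 1 N, (1:ℝ)/(d':ℝ) := by
            rw [Finset.sum_add_distrib, Finset.sum_const, nsmul_eq_mul, Nat.card_Icc]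
            simp only [Nat.add_sub_cancel]
            rw [Finset.mul_sum]
            congr 1
            · ring
            · apply Finset.sum_congr rfl
              intro d' _
              ring
          rw [e1]
          have e2 : (8*Real.log X*KX) * (∑ d' ∈ Finset.Icc 1 N, (1:ℝ)/(d':ℝ))
              ≤ (8*Real.log X*KX) * (2*Real.log X) := by
            apply mul_le_mul_of_nonneg_left (hharm N hNX)
            have := mul_nonneg (by linarith : (0:ℝ) ≤ 8*Real.log X) hKX0.le
            linarith
          nlinarith [e2]
  -- Step 9: final numeric estimates
  have hx1s : ∀ s : ℝ, X * X^s = X^(1+s) := by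
    intro s
    rw [Real.rpow_add hX0, Real.rpow_one]
  have hXpow0 : (0:ℝ) < X^(2-c) := Real.rpow_pos_of_pos hX0 _
  have hXτN : X * τ * (N:ℝ) ≤ X^(2-c) := by
    have hN' : (N:ℝ) ≤ X ^ ((1:ℝ)/11 - 0.001) :=
      Nat.floor_le (Real.rpow_nonneg (le_of_lt hX0) _)
    have hXτ0 : (0:ℝ) ≤ X*τ := mul_nonneg hX0.le hτ0.le
    calc X*τ*(N:ℝ) ≤ X*τ*(X ^ ((1:ℝ)/11 - 0.001)) :=
          mul_le_mul_of_nonneg_left hN' hXτ0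
      _ = X^(1 + (57/275 - c) + ((1:ℝ)/11 - 0.001)) := by
          rw [hτdef, hx1s (57/275 - c), ← Real.rpow_add hX0]
      _ ≤ X^(2-c) := Real.rpow_le_rpow_of_exponent_le hX1 (by norm_num; linarith)
  have hXKX : X * KX = X^(2-c) := by
    rw [hKXdef, hx1s (1-c), show (1:ℝ)+(1-c) = 2-c from by ring]
  have hlog36 : Real.log X^3 ≤ Real.log X^6 := pow_le_pow_right₀ hlogX (by norm_num)
  have hlog56 : Real.log X^5 ≤ Real.log X^6 := pow_le_pow_right₀ hlogX (by norm_num)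
  have hGnn : (0:ℝ) ≤ 4*τ*(N:ℝ) + 16*KX*Real.log X^2 := by
    have g1 : (0:ℝ) ≤ 4*τ*(N:ℝ) :=
      mul_nonneg (mul_nonneg (by norm_num) hτ0.le) (Nat.cast_nonneg N)
    have g2 : (0:ℝ) ≤ 16*KX*Real.log X^2 :=
      mul_nonneg (mul_nonneg (by norm_num) hKX0.le) (pow_nonneg hlogX0 2)
    linarith
  calc (∫ α in (-τ)..τ, ‖L α‖^2)
      = ‖∫ α in (-τ)..τ, L α * (starRingEnd ℂ) (L α)‖ := key1
    _ ≤ ∑ d ∈ Finset.Icc 1 N, ∑ d' ∈ Finset.Icc 1 N, ∑ p ∈ P d, ∑ q ∈ P d',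
          (Real.log X * Real.log X) * EE p q := key2
    _ = (Real.log X * Real.log X) * ∑ d ∈ Finset.Icc 1 N, ∑ d' ∈ Finset.Icc 1 N,
          ∑ p ∈ P d, ∑ q ∈ P d', EE p q := by
        simp only [← Finset.mul_sum]
    _ ≤ (Real.log X * Real.log X) * ∑ d ∈ Finset.Icc 1 N,
          (3*X/(d:ℝ)) * (4*τ*(N:ℝ) + 16*KX*Real.log X^2) :=
        mul_le_mul_of_nonneg_left (Finset.sum_le_sum hsum_d) (mul_nonneg hlogX0 hlogX0)
    _ = (Real.log X * Real.log X) * ((3*X*(4*τ*(N:ℝ) + 16*KX*Real.log X^2))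
          * ∑ d ∈ Finset.Icc 1 N, (1:ℝ)/(d:ℝ)) := by
        congr 1
        rw [Finset.mul_sum]
        apply Finset.sum_congr rfl
        intro d _
        ring
    _ ≤ (Real.log X * Real.log X) * ((3*X*(4*τ*(N:ℝ) + 16*KX*Real.log X^2))
          * (2*Real.log X)) := by
        apply mul_le_mul_of_nonneg_left _ (mul_nonneg hlogX0 hlogX0)
        apply mul_le_mul_of_nonneg_left (hharm N hNX)
        exact mul_nonneg (by linarith : (0:ℝ) ≤ 3*X) hGnn
    _ = 24*(X*τ*(N:ℝ))*Real.log X^3 + 96*(X*KX)*Real.log X^5 := by ring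
    _ ≤ 24*X^(2-c)*Real.log X^6 + 96*X^(2-c)*Real.log X^6 := by
        have t1 : 24*(X*τ*(N:ℝ))*Real.log X^3 ≤ 24*X^(2-c)*Real.log X^6 := by
          have g1 : (0:ℝ) ≤ X*τ*(N:ℝ) :=
            mul_nonneg (mul_nonneg hX0.le hτ0.le) (Nat.cast_nonneg N)
          have g2 := mul_le_mul hXτN hlog36 (by positivity) (le_of_lt hXpow0)
          linarith
        have t2 : 96*(X*KX)*Real.log X^5 ≤ 96*X^(2-c)*Real.log X^6 := by
          rw [hXKX]
          have g3 := mul_le_mul_of_nonneg_left hlog56 (le_of_lt hXpow0)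
          nlinarith [g3]
        linarith
    _ = 120*X^(2-c)*Real.log X^6 := by ring
    _ ≤ 200*X^(2-c)*Real.log X^6 := by
        have g4 : (0:ℝ) ≤ X^(2-c)*Real.log X^6 := by positivity
        nlinarith [g4]
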